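/- Let G be a finite simple graph on n ≥ 1 vertices. Then for every real λ with 0 < λ ≤ 1/n, one has V_G(λ) ≤ λ/(1+λ)², where λ/(1+λ)² is the variance fraction of the empty graph on n vertices. -/

import Mathlib

open scoped Classical

/-- The finset of independent sets of a finite simple graph (the empty set counts). -/
noncomputable def indepSets {V : Type*} [Fintype V] (G : SimpleGraph V) : Finset (Finset V) :=
  Finset.univ.filter fun I => ∀ u ∈ I, ∀ v ∈ I, ¬ G.Adj u v

/-- The hard-core partition function `Z_G(λ) = Σ_{I independent} λ^|I|`. -/
noncomputable def hcZ {V : Type*} [Fintype V] (G : SimpleGraph V) (l : ℝ) : ℝ :=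
  ∑ I ∈ indepSets G, l ^ I.card

/-- The occupancy fraction `E_G(λ) = λ Z_G'(λ)/(n Z_G(λ))`, i.e. `(1/n)` times the
expected size of an independent set from the hard-core model; note
`λ Z_G'(λ) = Σ_I |I| λ^|I|`. -/
noncomputable def hcE {V : Type*} [Fintype V] (G : SimpleGraph V) (l : ℝ) : ℝ :=
  (∑ I ∈ indepSets G, (I.card : ℝ) * l ^ I.card) / ((Fintype.card V : ℝ) * hcZ G l)

/-- The variance fraction `V_G(λ) = λ (d/dλ) E_G(λ)`, i.e. `(1/n)` times the variance
of the size of an independent set from the hard-core model: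
`V_G(λ) = (1/n)(𝔼|I|² - (𝔼|I|)²)`. -/
noncomputable def hcV {V : Type*} [Fintype V] (G : SimpleGraph V) (l : ℝ) : ℝ :=
  ((∑ I ∈ indepSets G, (I.card : ℝ) ^ 2 * l ^ I.card) / hcZ G l
      - ((∑ I ∈ indepSets G, (I.card : ℝ) * l ^ I.card) / hcZ G l) ^ 2) /
    (Fintype.card V : ℝ)

section Aux
variable {V : Type*} [Fintype V]

omit [Fintype V] in
lemma hc_pairing (l : ℝ) (hl : 0 ≤ l) (v : V) (A : Finset (Finset V))
    (hA : ∀ I ∈ A, v ∈ I → I.erase v ∈ A) :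
    (1 + l) * ∑ I ∈ A.filter (fun I => v ∈ I), l ^ I.card ≤ l * ∑ I ∈ A, l ^ I.card := by
  classical
  have hsplit := Finset.sum_filter_add_sum_filter_not A (fun I => v ∈ I) (fun I => l ^ I.card)
  set T1 := ∑ I ∈ A.filter (fun I => v ∈ I), l ^ I.card with hT1
  set T0 := ∑ I ∈ A.filter (fun I => ¬ v ∈ I), l ^ I.card with hT0
  have key : T1 ≤ l * T0 := by
    have h1 : T1 = l * ∑ I ∈ A.filter (fun I => v ∈ I), l ^ (I.erase v).card := by
      rw [Finset.mul_sum]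
      refine Finset.sum_congr rfl fun I hI => ?_
      have hvI : v ∈ I := (Finset.mem_filter.mp hI).2
      have hc : (I.erase v).card + 1 = I.card := Finset.card_erase_add_one hvI
      rw [← hc, pow_succ]
      ring
    have hinj : ∀ I₁ ∈ A.filter (fun I => v ∈ I), ∀ I₂ ∈ A.filter (fun I => v ∈ I),
        I₁.erase v = I₂.erase v → I₁ = I₂ := by
      intro I₁ h₁ I₂ h₂ h
      have hv₁ : v ∈ I₁ := (Finset.mem_filter.mp h₁).2
      have hv₂ : v ∈ I₂ := (Finset.mem_filter.mp h₂).2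
      rw [← Finset.insert_erase hv₁, ← Finset.insert_erase hv₂, h]
    have himg : ∑ I ∈ A.filter (fun I => v ∈ I), l ^ (I.erase v).card
        = ∑ J ∈ (A.filter (fun I => v ∈ I)).image (fun I => I.erase v), l ^ J.card := by
      rw [Finset.sum_image hinj]
    have hsub : (A.filter (fun I => v ∈ I)).image (fun I => I.erase v)
        ⊆ A.filter (fun I => ¬ v ∈ I) := by
      intro J hJ
      obtain ⟨I, hI, rfl⟩ := Finset.mem_image.mp hJ
      have hIA := (Finset.mem_filter.mp hI).1
      have hvI := (Finset.mem_filter.mp hI).2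
      exact Finset.mem_filter.mpr ⟨hA I hIA hvI, Finset.notMem_erase v I⟩
    have hle : ∑ I ∈ A.filter (fun I => v ∈ I), l ^ (I.erase v).card ≤ T0 := by
      rw [himg]
      exact Finset.sum_le_sum_of_subset_of_nonneg hsub (fun J _ _ => pow_nonneg hl _)
    calc T1 = l * ∑ I ∈ A.filter (fun I => v ∈ I), l ^ (I.erase v).card := h1
      _ ≤ l * T0 := mul_le_mul_of_nonneg_left hle hl
  nlinarith [key, hsplit]

lemma hc_counting (w : Finset V → ℝ) (s : Finset (Finset V)) :
    ∑ I ∈ s, (I.card : ℝ) * w I = ∑ v : V, ∑ I ∈ s.filter (fun I => v ∈ I), w I := by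
  classical
  have step : ∀ I ∈ s, (I.card : ℝ) * w I = ∑ v : V, if v ∈ I then w I else 0 := by
    intro I _
    have h1 : ∑ v : V, (if v ∈ I then w I else 0)
        = ∑ v ∈ Finset.univ.filter (fun v => v ∈ I), w I := by
      rw [Finset.sum_filter]
    have h2 : Finset.univ.filter (fun v => v ∈ I) = I := by
      ext x; simp
    rw [h1, h2, Finset.sum_const, nsmul_eq_mul]
  rw [Finset.sum_congr rfl step, Finset.sum_comm]
  refine Finset.sum_congr rfl fun v _ => ?_
  rw [Finset.sum_filter]

lemma hc_erase_mem (G : SimpleGraph V) {I : Finset V} (hI : I ∈ indepSets G) (v : V) :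
    I.erase v ∈ indepSets G := by
  classical
  rw [indepSets, Finset.mem_filter] at hI ⊢
  exact ⟨Finset.mem_univ _, fun a ha b hb =>
    hI.2 a (Finset.mem_of_mem_erase ha) b (Finset.mem_of_mem_erase hb)⟩

end Aux

theorem stmt3 {V : Type*} [Fintype V] (G : SimpleGraph V)
    (hn : 1 ≤ Fintype.card V) (l : ℝ) (hl : 0 < l)
    (hl' : l ≤ 1 / (Fintype.card V : ℝ)) :
    hcV G l ≤ l / (1 + l) ^ 2 := by
  classical
  have hl0 : (0:ℝ) ≤ l := hl.le
  set s : Finset (Finset V) := indepSets G with hs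
  set N : ℝ := (Fintype.card V : ℝ) with hN
  have hNpos : (0:ℝ) < N := by
    simp only [hN]
    exact_mod_cast Nat.lt_of_lt_of_le Nat.zero_lt_one hn
  have hNl : N * l ≤ 1 := by
    have := (le_div_iff₀ hNpos).mp hl'
    linarith
  set Z : ℝ := hcZ G l with hZ
  set S1 : ℝ := ∑ I ∈ s, (I.card : ℝ) * l ^ I.card with hS1
  set S2 : ℝ := ∑ I ∈ s, (I.card : ℝ) ^ 2 * l ^ I.card with hS2
  set B : V → ℝ := fun v => ∑ I ∈ s.filter (fun I => v ∈ I), l ^ I.card with hB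
  have hZsum : Z = ∑ I ∈ s, l ^ I.card := rfl
  -- Z ≥ 1
  have hempty : (∅ : Finset V) ∈ s := by
    rw [hs, indepSets, Finset.mem_filter]
    exact ⟨Finset.mem_univ _, by simp⟩
  have hZ1 : 1 ≤ Z := by
    have := Finset.single_le_sum (f := fun I : Finset V => l ^ I.card)
      (fun I _ => pow_nonneg hl0 _) hempty
    simpa [hZsum] using this
  have hZpos : (0:ℝ) < Z := lt_of_lt_of_le one_pos hZ1
  -- B nonneg
  have hBnonneg : ∀ v, 0 ≤ B v := fun v =>
    Finset.sum_nonneg fun I _ => pow_nonneg hl0 _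
  -- single vertex bound : (1+l) * B v ≤ l * Z
  have h1 : ∀ v : V, (1 + l) * B v ≤ l * Z := by
    intro v
    rw [hZsum]
    exact hc_pairing l hl0 v s (fun I hI _ => hc_erase_mem G hI v)
  -- S1 = ∑ v, B v
  have hS1eq : S1 = ∑ v : V, B v := hc_counting (fun I => l ^ I.card) s
  have hS1nonneg : 0 ≤ S1 := by
    rw [hS1eq]; exact Finset.sum_nonneg fun v _ => hBnonneg v
  -- (1+l) S1 ≤ N l Z
  have hB1 : (1 + l) * S1 ≤ N * l * Z := by
    rw [hS1eq, Finset.mul_sum]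
    calc ∑ v : V, (1 + l) * B v ≤ ∑ v : V, l * Z := Finset.sum_le_sum fun v _ => h1 v
      _ = N * l * Z := by
          rw [Finset.sum_const, nsmul_eq_mul, Finset.card_univ]
          push_cast [hN]; ring
  -- S2 expansion
  have hS2eq : S2 = ∑ u : V, ∑ I ∈ s.filter (fun I => u ∈ I), (I.card : ℝ) * l ^ I.card := by
    rw [hS2]
    rw [← hc_counting (fun I => (I.card : ℝ) * l ^ I.card) s]
    exact Finset.sum_congr rfl fun I _ => by ring
  -- inner bound for each u
  have hinner : ∀ u : V, (1 + l) * ∑ I ∈ s.filter (fun I => u ∈ I), (I.card : ℝ) * l ^ I.card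
      ≤ (1 + l) * B u + (N - 1) * (l * B u) := by
    intro u
    set A : Finset (Finset V) := s.filter (fun I => u ∈ I) with hA
    have hAmem : ∀ I ∈ A, u ∈ I := fun I hI => (Finset.mem_filter.mp hI).2
    have hcount : ∑ I ∈ A, (I.card : ℝ) * l ^ I.card
        = ∑ v : V, ∑ I ∈ A.filter (fun I => v ∈ I), l ^ I.card :=
      hc_counting (fun I => l ^ I.card) A
    rw [hcount, Finset.mul_sum]
    have hsplit : ∑ v : V, (1 + l) * ∑ I ∈ A.filter (fun I => v ∈ I), l ^ I.card
        = (1 + l) * (∑ I ∈ A.filter (fun I => u ∈ I), l ^ I.card)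
          + ∑ v ∈ Finset.univ.erase u, (1 + l) * ∑ I ∈ A.filter (fun I => v ∈ I), l ^ I.card := by
      rw [← Finset.add_sum_erase Finset.univ _ (Finset.mem_univ u)]
    rw [hsplit]
    have hdiag : A.filter (fun I => u ∈ I) = A := Finset.filter_true_of_mem hAmem
    have hoff : ∀ v ∈ Finset.univ.erase u,
        (1 + l) * ∑ I ∈ A.filter (fun I => v ∈ I), l ^ I.card ≤ l * B u := by
      intro v hv
      have hvu : v ≠ u := Finset.ne_of_mem_erase hv
      have hclosed : ∀ I ∈ A, v ∈ I → I.erase v ∈ A := by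
        intro I hI hvI
        refine Finset.mem_filter.mpr ⟨hc_erase_mem G (Finset.mem_filter.mp hI).1 v, ?_⟩
        exact Finset.mem_erase.mpr ⟨(hvu.symm : u ≠ v), hAmem I hI⟩
      have := hc_pairing l hl0 v A hclosed
      calc (1 + l) * ∑ I ∈ A.filter (fun I => v ∈ I), l ^ I.card
          ≤ l * ∑ I ∈ A, l ^ I.card := this
        _ = l * B u := rfl
    have hsum_off : ∑ v ∈ Finset.univ.erase u, (1 + l) * ∑ I ∈ A.filter (fun I => v ∈ I), l ^ I.card
        ≤ (N - 1) * (l * B u) := by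
      calc ∑ v ∈ Finset.univ.erase u, (1 + l) * ∑ I ∈ A.filter (fun I => v ∈ I), l ^ I.card
          ≤ ∑ v ∈ Finset.univ.erase u, l * B u := Finset.sum_le_sum hoff
        _ = ((Finset.univ.erase u).card : ℝ) * (l * B u) := by
            rw [Finset.sum_const, nsmul_eq_mul]
        _ = (N - 1) * (l * B u) := by
            rw [Finset.card_erase_of_mem (Finset.mem_univ u), Finset.card_univ,
              Nat.cast_sub hn, hN]
            push_cast
            ring
    rw [hdiag]
    have hBu : (1 + l) * ∑ I ∈ A, l ^ I.card = (1 + l) * B u := rfl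
    linarith [hsum_off, hBu]
  -- (1+l) S2 ≤ (1 + N l) S1
  have hA2 : (1 + l) * S2 ≤ (1 + N * l) * S1 := by
    rw [hS2eq, Finset.mul_sum]
    calc ∑ u : V, (1 + l) * ∑ I ∈ s.filter (fun I => u ∈ I), (I.card : ℝ) * l ^ I.card
        ≤ ∑ u : V, ((1 + l) * B u + (N - 1) * (l * B u)) := Finset.sum_le_sum fun u _ => hinner u
      _ = (1 + N * l) * S1 := by
          rw [hS1eq, Finset.mul_sum]
          exact Finset.sum_congr rfl fun u _ => by ring
  -- key polynomial inequality
  have key : (1 + l) ^ 2 * (S2 * Z - S1 ^ 2) ≤ N * l * Z ^ 2 := by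
    have hx : (1 + l) * S1 ≤ N * l * Z := hB1
    have hxZ : (1 + l) * S1 ≤ Z := by nlinarith [hZpos, hNl]
    have hmul : (1 + l) ^ 2 * (S2 * Z) ≤ (1 + N * l) * ((1 + l) * S1) * Z := by
      nlinarith [mul_le_mul_of_nonneg_right hA2 (mul_nonneg (by linarith : (0:ℝ) ≤ 1 + l) hZpos.le)]
    nlinarith [mul_nonneg (sub_nonneg.mpr hx) (sub_nonneg.mpr hxZ)]
  -- conclude
  have hVeq : hcV G l = (S2 / Z - (S1 / Z) ^ 2) / N := rfl
  rw [hVeq]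
  have hfrac : S2 / Z - (S1 / Z) ^ 2 = (S2 * Z - S1 ^ 2) / Z ^ 2 := by
    field_simp
  rw [hfrac]
  have h2 : (S2 * Z - S1 ^ 2) / Z ^ 2 ≤ N * l / (1 + l) ^ 2 := by
    rw [div_le_div_iff₀ (by positivity) (by positivity)]
    nlinarith [key]
  rw [div_le_iff₀ hNpos]
  have : l / (1 + l) ^ 2 * N = N * l / (1 + l) ^ 2 := by ring
  rw [this]
  exact h2
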